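/- arXiv:1910.03847 — 2 statements merged into one kernel-verified Lean document; each statement's English description precedes it below -/
import Mathlib

section
/- Let X be a real Banach space and φ : X → (-∞, +∞] a proper convex lower semicontinuous function. Then ∂φ is a maximal monotone operator: if (z, z*) ∈ X × X* satisfies ⟨z - x, z* - x*⟩ ≥ 0 for all (x, x*) in the graph of ∂φ, then (z, z*) ∈ ∂φ. -/
noncomputable section

variable {X : Type*} [NormedAddCommGroup X] [NormedSpace ℝ X] [CompleteSpace X]

/-- The subdifferential of an extended-real-valued function `φ : X → (-∞,+∞]`,
viewed as a subset of `X × X*`: `(x, x*) ∈ ∂φ` iff `⟨y - x, x*⟩ + φ(x) ≤ φ(y)` for all `y`. -/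
def subdiff (φ : X → EReal) : Set (X × (X →L[ℝ] ℝ)) :=
  {p | ∀ y : X, ((p.2 (y - p.1) : ℝ) : EReal) + φ p.1 ≤ φ y}

/-- Convexity for extended-real-valued functions. -/
def ERealConvexOn {E : Type*} [AddCommGroup E] [Module ℝ E] (φ : E → EReal) : Prop :=
  ∀ x y : E, ∀ a b : ℝ, 0 ≤ a → 0 ≤ b → a + b = 1 →
    φ (a • x + b • y) ≤ (a : EReal) * φ x + (b : EReal) * φ y

/-- A function `X → (-∞,+∞]` is proper: it never takes the value `-∞` and is
finite somewhere. -/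
def ProperFn {E : Type*} (φ : E → EReal) : Prop :=
  (∀ x, φ x ≠ ⊥) ∧ (∃ x, φ x ≠ ⊤)

/-- The duality mapping `J_X(x) = {x* : ⟨x, x*⟩ = ‖x‖² = ‖x*‖²}`. -/
def dualityMap (x : X) : Set (X →L[ℝ] ℝ) :=
  {x' | x' x = ‖x‖ ^ 2 ∧ ‖x‖ ^ 2 = ‖x'‖ ^ 2}

/-- A monotone subset of `X × X*`. -/
def MonotoneSet (A : Set (X × (X →L[ℝ] ℝ))) : Prop :=
  ∀ p ∈ A, ∀ q ∈ A, 0 ≤ (p.2 - q.2) (p.1 - q.1)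

/-- A maximal monotone subset of `X × X*`. -/
def MaximalMonotoneSet (A : Set (X × (X →L[ℝ] ℝ))) : Prop :=
  MonotoneSet A ∧
    ∀ p : X × (X →L[ℝ] ℝ), (∀ q ∈ A, 0 ≤ (p.2 - q.2) (p.1 - q.1)) → p ∈ A

/-- The Fitzpatrick function of an operator `A : X ⇉ X*`:
`H_A(x, x*) = sup {⟨u, x*⟩ + ⟨x, u*⟩ - ⟨u, u*⟩ : (u, u*) ∈ A}`. -/
def fitz (A : Set (X × (X →L[ℝ] ℝ))) (p : X × (X →L[ℝ] ℝ)) : EReal :=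
  ⨆ q ∈ A, ((p.2 q.1 + q.2 p.1 - q.2 q.1 : ℝ) : EReal)

/-- `(x*, x) ∈ ∂H_A(u, u*)`, the subdifferential of the Fitzpatrick function at `(u, u*)`
with the pairing `⟨(x*, x), (z, z*)⟩ = ⟨z, x*⟩ + ⟨x, z*⟩`:
`⟨z - u, x*⟩ + ⟨x, z* - u*⟩ + H(u, u*) ≤ H(z, z*)` for all `(z, z*)`. -/
def inSubdiffFitz (A : Set (X × (X →L[ℝ] ℝ))) (u : X) (u' : X →L[ℝ] ℝ)
    (x' : X →L[ℝ] ℝ) (x : X) : Prop :=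
  ∀ z : X, ∀ z' : X →L[ℝ] ℝ,
    ((x' (z - u) + (z' - u') x : ℝ) : EReal) + fitz A (u, u') ≤ fitz A (z, z')



lemma ereal_shuffle (a b : EReal) (r s : ℝ) :
    (r:EReal) + a ≤ b + (s:EReal) ↔ ((r - s:ℝ):EReal) + a ≤ b := by
  induction a using EReal.rec with
  | bot => simp [EReal.add_bot]
  | top =>
    induction b using EReal.rec with
    | bot =>
      rw [EReal.coe_add_top, EReal.bot_add, EReal.add_top_of_ne_bot (EReal.coe_ne_bot _)]
    | coe t =>
      rw [EReal.coe_add_top, EReal.add_top_of_ne_bot (EReal.coe_ne_bot _), ← EReal.coe_add]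
      simp only [top_le_iff, ← EReal.coe_add, ← EReal.coe_sub, EReal.coe_ne_top]
    | top =>
      rw [EReal.coe_add_top, EReal.add_top_of_ne_bot (EReal.coe_ne_bot _),
        EReal.top_add_coe]
  | coe x =>
    induction b using EReal.rec with
    | bot =>
      rw [EReal.bot_add]
      simp only [le_bot_iff, ← EReal.coe_add, ← EReal.coe_sub, EReal.coe_ne_bot]
    | coe t =>
      rw [← EReal.coe_add, ← EReal.coe_add, ← EReal.coe_add, EReal.coe_le_coe_iff,
        EReal.coe_le_coe_iff]
      constructor <;> intro h <;> linarith
    | top =>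
      rw [EReal.top_add_coe]
      simp [le_top]

lemma ereal_add_coe_le_coe (a : EReal) (r t : ℝ) :
    a + (r:EReal) ≤ (t:EReal) ↔ a ≤ ((t - r:ℝ):EReal) := by
  induction a using EReal.rec with
  | bot => simp [EReal.bot_add]
  | top =>
    rw [EReal.top_add_coe]
    simp only [top_le_iff, ← EReal.coe_sub, EReal.coe_ne_top]
  | coe x =>
    rw [← EReal.coe_add, EReal.coe_le_coe_iff, EReal.coe_le_coe_iff]
    constructor <;> intro h <;> linarith

lemma ereal_coe_add_le_iff (r : ℝ) (a : EReal) (t : ℝ) :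
    (r:EReal) + a ≤ (t:EReal) ↔ a ≤ ((t - r:ℝ):EReal) := by
  rw [add_comm]; exact ereal_add_coe_le_coe a r t

lemma ereal_coe_le_add_coe (r : ℝ) (a : EReal) (t : ℝ) :
    (t:EReal) ≤ a + (r:EReal) ↔ ((t - r:ℝ):EReal) ≤ a := by
  induction a using EReal.rec with
  | bot =>
    rw [EReal.bot_add]
    simp only [le_bot_iff, ← EReal.coe_sub, EReal.coe_ne_bot]
  | top => simp [EReal.top_add_coe, le_top]
  | coe x =>
    rw [← EReal.coe_add, EReal.coe_le_coe_iff, EReal.coe_le_coe_iff]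
    constructor <;> intro h <;> linarith



lemma epi_convex (φ : X → EReal) (hconv : ERealConvexOn φ) :
    Convex ℝ {p : X × ℝ | φ p.1 ≤ (p.2 : EReal)} := by
  rintro ⟨x, t⟩ hx ⟨y, u⟩ hu a b ha hb hab
  simp only [Set.mem_setOf_eq] at hx hu ⊢
  have h1 : φ (a • x + b • y) ≤ (a : EReal) * φ x + (b : EReal) * φ y :=
    hconv x y a b ha hb hab
  have h2 : (a : EReal) * φ x ≤ (a : EReal) * (t : EReal) :=
    mul_le_mul_of_nonneg_left hx (by exact_mod_cast ha)
  have h3 : (b : EReal) * φ y ≤ (b : EReal) * (u : EReal) :=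
    mul_le_mul_of_nonneg_left hu (by exact_mod_cast hb)
  refine le_trans h1 (le_trans (add_le_add h2 h3) ?_)
  rw [← EReal.coe_mul, ← EReal.coe_mul, ← EReal.coe_add]
  rfl

lemma epi_closed (φ : X → EReal) (hlsc : LowerSemicontinuous φ) :
    IsClosed {p : X × ℝ | φ p.1 ≤ (p.2 : EReal)} := by
  have h := hlsc.isClosed_epigraph
  have heq : {p : X × ℝ | φ p.1 ≤ (p.2:EReal)}
      = (fun p : X × ℝ => (p.1, (p.2:EReal))) ⁻¹' {p : X × EReal | φ p.1 ≤ p.2} := rfl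
  rw [heq]
  exact h.preimage (continuous_fst.prodMk (continuous_coe_real_ereal.comp continuous_snd))

lemma lsc_add_cont (Φ : X → EReal) (hΦ : LowerSemicontinuous Φ) (hbot : ∀ x, Φ x ≠ ⊥)
    (g : X → ℝ) (hg : Continuous g) :
    LowerSemicontinuous fun x => Φ x + ((g x : ℝ) : EReal) :=
  hΦ.add' ((continuous_coe_real_ereal.comp hg).lowerSemicontinuous)
    fun x => EReal.continuousAt_add (Or.inr (EReal.coe_ne_bot _)) (Or.inl (hbot x))



-- decomposition of a functional on X × ℝ
lemma decomp (L : (X × ℝ) →L[ℝ] ℝ) (y : X) (t : ℝ) :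
    L (y, t) = L (y, 0) + t * L (0, 1) := by
  have h : (y, t) = (y, (0:ℝ)) + t • ((0:X), (1:ℝ)) := by
    simp [Prod.ext_iff]
  rw [h, map_add, map_smul, smul_eq_mul]

lemma exists_affine_minorant (φ : X → EReal) (hbot : ∀ x, φ x ≠ ⊥)
    {x₀ : X} (hx₀ : φ x₀ ≠ ⊤)
    (hE : Convex ℝ {p : X × ℝ | φ p.1 ≤ (p.2 : EReal)})
    (hEcl : IsClosed {p : X × ℝ | φ p.1 ≤ (p.2 : EReal)}) :
    ∃ (g : X →L[ℝ] ℝ) (c : ℝ), ∀ x, ((g x + c : ℝ) : EReal) ≤ φ x := by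
  set E := {p : X × ℝ | φ p.1 ≤ (p.2 : EReal)} with hEdef
  set m : ℝ := (φ x₀).toReal with hm
  have hφx₀ : φ x₀ = (m : EReal) := (EReal.coe_toReal hx₀ (hbot x₀)).symm
  have hpt : (x₀, m - 1) ∉ E := by
    simp only [hEdef, Set.mem_setOf_eq, hφx₀, EReal.coe_le_coe_iff]
    linarith
  obtain ⟨L, u, hLE, hLpt⟩ := geometric_hahn_banach_closed_point hE hEcl hpt
  set c₀ : ℝ := L (0, 1) with hc₀
  -- (x₀, m) ∈ E
  have hmE : (x₀, m) ∈ E := by simp [hEdef, hφx₀]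
  have h1 : L (x₀, 0) + m * c₀ < u := by
    have := hLE _ hmE; rwa [decomp] at this
  have h2 : u < L (x₀, 0) + (m - 1) * c₀ := by
    have := hLpt; rwa [decomp] at this
  have hc₀neg : c₀ < 0 := by nlinarith
  refine ⟨(-(c₀⁻¹)) • (L.comp (ContinuousLinearMap.inl ℝ X ℝ)), u / c₀, fun x => ?_⟩
  by_cases hx : φ x = ⊤
  · rw [hx]; exact le_top
  · have hφx : φ x = ((φ x).toReal : EReal) := (EReal.coe_toReal hx (hbot x)).symm
    have hxE : (x, (φ x).toReal) ∈ E := by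
      simp only [hEdef, Set.mem_setOf_eq]; exact EReal.le_coe_toReal hx
    have h3 : L (x, 0) + (φ x).toReal * c₀ < u := by
      have := hLE _ hxE; rwa [decomp] at this
    rw [hφx, EReal.coe_le_coe_iff]
    have hL0 : ((-(c₀⁻¹)) • (L.comp (ContinuousLinearMap.inl ℝ X ℝ))) x
        = -(c₀⁻¹) * L (x, 0) := by
      simp [ContinuousLinearMap.smul_apply, ContinuousLinearMap.comp_apply]
    rw [hL0]
    have hc₀ne : c₀ ≠ 0 := ne_of_lt hc₀neg
    have h4 : c₀ * c₀⁻¹ = 1 := mul_inv_cancel₀ hc₀ne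
    rw [div_eq_mul_inv]
    have h5 := mul_lt_mul_of_neg_left h3 (inv_neg''.mpr hc₀neg)
    have h6 : c₀⁻¹ * (L (x,0) + (φ x).toReal * c₀)
        = c₀⁻¹ * L (x,0) + (φ x).toReal * (c₀ * c₀⁻¹) := by ring
    rw [h6, h4, mul_one] at h5
    linarith



lemma my_ekeland {F : X → ℝ} (hF : LowerSemicontinuous F) {B : ℝ} (hB : ∀ x, B ≤ F x)
    {ε : ℝ} (hε : 0 < ε) (x₀ : X) :
    ∃ xb : X, F xb ≤ F x₀ ∧ ∀ y, F xb ≤ F y + ε * ‖y - xb‖ := by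
  classical
  set S : X → Set X := fun x => {y | F y + ε * ‖y - x‖ ≤ F x} with hS
  have hself : ∀ x, x ∈ S x := by intro x; simp [hS]
  have hSne : ∀ x, (F '' S x).Nonempty := fun x => ⟨F x, x, hself x, rfl⟩
  have hSbdd : ∀ x, BddBelow (F '' S x) := by
    intro x; exact ⟨B, by rintro a ⟨y, -, rfl⟩; exact hB y⟩
  have hex : ∀ x : X, ∀ n : ℕ, ∃ y, y ∈ S x ∧ F y < sInf (F '' S x) + (1/2)^n := by
    intro x n
    obtain ⟨a, ⟨y, hy, rfl⟩, ha⟩ := Real.lt_sInf_add_pos (hSne x) (by positivity :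
      (0:ℝ) < (1/2)^n)
    exact ⟨y, hy, ha⟩
  choose pick hpick1 hpick2 using hex
  set seq : ℕ → X := fun n => Nat.rec x₀ (fun n x => pick x n) n with hseqdef
  have hseq0 : seq 0 = x₀ := rfl
  have hseqS : ∀ n, seq (n + 1) = pick (seq n) n := fun n => rfl
  -- basic step inequality
  have hstep : ∀ n, F (seq (n+1)) + ε * ‖seq (n+1) - seq n‖ ≤ F (seq n) := by
    intro n; rw [hseqS]; exact hpick1 (seq n) n
  have hanti : ∀ n, F (seq (n+1)) ≤ F (seq n) := by
    intro n
    have := hstep n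
    nlinarith [norm_nonneg (seq (n+1) - seq n), hε.le]
  have hmono : ∀ m n, n ≤ m → F (seq m) ≤ F (seq n) := by
    intro m n h
    induction m with
    | zero => simp [Nat.le_zero.mp h]
    | succ k ih =>
      rcases Nat.eq_or_lt_of_le h with rfl | h'
      · rfl
      · exact le_trans (hanti k) (ih (Nat.lt_succ_iff.mp h'))
  -- chained distance estimate
  have hchain : ∀ n m, n ≤ m → ε * ‖seq m - seq n‖ ≤ F (seq n) - F (seq m) := by
    intro n m h
    induction m with
    | zero =>
      have : n = 0 := Nat.le_zero.mp h
      subst this; simp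
    | succ k ih =>
      rcases Nat.eq_or_lt_of_le h with rfl | h'
      · simp
      · have hk := ih (Nat.lt_succ_iff.mp h')
        have h2 := hstep k
        have tri : ‖seq (k+1) - seq n‖ ≤ ‖seq (k+1) - seq k‖ + ‖seq k - seq n‖ := by
          have := norm_sub_le_norm_sub_add_norm_sub (seq (k+1)) (seq k) (seq n)
          linarith
        have := mul_le_mul_of_nonneg_left tri hε.le
        nlinarith
  -- limit of F ∘ seq
  set L : ℝ := ⨅ n, F (seq n) with hL
  have hFseq_bdd : BddBelow (Set.range fun n => F (seq n)) :=
    ⟨B, by rintro a ⟨n, rfl⟩; exact hB _⟩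
  have hFtend : Filter.Tendsto (fun n => F (seq n)) Filter.atTop (nhds L) :=
    tendsto_atTop_ciInf (fun a b hab => hmono b a hab) hFseq_bdd
  -- seq is Cauchy
  have hcauchy : CauchySeq seq := by
    apply cauchySeq_of_le_tendsto_0 (fun n => (F (seq n) - L) / ε)
    · intro n m N hn hm
      wlog h : n ≤ m generalizing n m
      · rw [dist_comm]; exact this m n hm hn (le_of_not_ge h)
      have h1 := hchain n m h
      have h2 : L ≤ F (seq m) := ciInf_le hFseq_bdd m
      have h3 : F (seq n) ≤ F (seq N) := hmono n N hn
      rw [dist_comm, dist_eq_norm, le_div_iff₀ hε]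
      nlinarith
    · have h0 : Filter.Tendsto (fun n => F (seq n) - L) Filter.atTop (nhds (L - L)) :=
        hFtend.sub (tendsto_const_nhds : Filter.Tendsto (fun _ : ℕ => L) Filter.atTop (nhds L))
      rw [sub_self] at h0
      simpa using h0.div_const ε
  obtain ⟨xb, hxb⟩ := cauchySeq_tendsto_of_complete hcauchy
  -- key: F xb + ε‖xb - seq n‖ ≤ F (seq n)
  have hkey : ∀ n, F xb + ε * ‖xb - seq n‖ ≤ F (seq n) := by
    intro n
    by_contra hcon
    push_neg at hcon
    set θ : ℝ := F xb + ε * ‖xb - seq n‖ - F (seq n) with hθ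
    have hθpos : 0 < θ := by linarith
    have h1 : ∀ᶠ m in Filter.atTop, F xb - θ/2 < F (seq m) := by
      have := hF xb (F xb - θ/2) (by linarith)
      exact hxb.eventually this
    have h2 : Filter.Tendsto (fun m => ε * ‖seq m - seq n‖) Filter.atTop
        (nhds (ε * ‖xb - seq n‖)) := by
      apply Filter.Tendsto.const_mul
      exact ((continuous_norm.comp (continuous_sub_right (seq n))).continuousAt).tendsto.comp hxb
    have h3 : ∀ᶠ m in Filter.atTop, ε * ‖xb - seq n‖ - θ/2 < ε * ‖seq m - seq n‖ :=
      h2.eventually_const_lt (by linarith)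
    have h4 : ∀ᶠ m in Filter.atTop, n ≤ m := Filter.eventually_ge_atTop n
    obtain ⟨m, hm1, hm2, hm3⟩ := (h1.and (h3.and h4)).exists
    have h5 := hchain n m hm3
    nlinarith [hm1, hm2]
  refine ⟨xb, ?_, ?_⟩
  · have := hkey 0
    rw [hseq0] at this
    nlinarith [norm_nonneg (xb - x₀), hε.le]
  · intro y
    by_contra hcon
    push_neg at hcon
    -- y ∈ S (seq n) for every n
    have hyS : ∀ n, y ∈ S (seq n) := by
      intro n
      have tri : ‖y - seq n‖ ≤ ‖y - xb‖ + ‖xb - seq n‖ := by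
        have := norm_sub_le_norm_sub_add_norm_sub y xb (seq n)
        linarith
      have := hkey n
      simp only [hS, Set.mem_setOf_eq]
      nlinarith [mul_le_mul_of_nonneg_left tri hε.le]
    have hbnd : ∀ n, F (seq (n+1)) ≤ F y + (1/2)^n := by
      intro n
      have h1 := hpick2 (seq n) n
      have h2 : sInf (F '' S (seq n)) ≤ F y := csInf_le (hSbdd _) ⟨y, hyS n, rfl⟩
      rw [← hseqS] at h1
      linarith
    -- F xb ≤ F y
    have hFxb : F xb ≤ F y := by
      have h1 : ∀ n, F xb ≤ F y + (1/2)^n := by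
        intro n
        have := hkey (n+1)
        have := hbnd n
        nlinarith [norm_nonneg (xb - seq (n+1)), hε.le]
      by_contra hcc
      push_neg at hcc
      obtain ⟨n, hn⟩ := exists_pow_lt_of_lt_one (by linarith : (0:ℝ) < F xb - F y)
        (by norm_num : (1/2:ℝ) < 1)
      have := h1 n
      linarith
    nlinarith [norm_nonneg (y - xb), hε.le]



lemma lsc_trunc {f : X → EReal} (hf : LowerSemicontinuous f) {B M : ℝ}
    (hB : ∀ x, (B:EReal) ≤ f x) :
    LowerSemicontinuous (fun x => (min (f x) ((M:ℝ):EReal)).toReal) := by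
  intro x c hc
  set v : EReal := min (f x) ((M:ℝ):EReal) with hv
  have hvtop : v ≠ ⊤ := ne_top_of_le_ne_top (EReal.coe_ne_top M) (min_le_right _ _)
  have hvbot : v ≠ ⊥ := by
    have : (min B M : ℝ) ≤ v := by
      rw [hv]
      exact le_min (le_trans (by exact_mod_cast min_le_left B M) (hB x))
        (by exact_mod_cast min_le_right B M)
    exact ne_bot_of_le_ne_bot (EReal.coe_ne_bot _) this
  have hcv : (c : EReal) < v := by
    rw [← EReal.coe_toReal hvtop hvbot]
    exact_mod_cast hc
  have hcf : (c : EReal) < f x := lt_of_lt_of_le hcv (min_le_left _ _)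
  have hcM : (c : EReal) < (M : EReal) := lt_of_lt_of_le hcv (min_le_right _ _)
  filter_upwards [hf x c hcf] with y hy
  have h1 : (c:EReal) < min (f y) ((M:ℝ):EReal) := lt_min hy hcM
  have h2 : min (f y) ((M:ℝ):EReal) ≠ ⊤ :=
    ne_top_of_le_ne_top (EReal.coe_ne_top M) (min_le_right _ _)
  have h3 : min (f y) ((M:ℝ):EReal) ≠ ⊥ := by
    intro hb; rw [hb] at h1; exact (not_lt_bot h1)
  have := EReal.coe_toReal h2 h3
  rw [← this] at h1
  exact_mod_cast h1

set_option maxHeartbeats 2000000 in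
lemma approx (ψ : X → EReal) (hbot : ∀ x, ψ x ≠ ⊥) {x₀ : X} (hx₀ : ψ x₀ ≠ ⊤)
    (hEconv : Convex ℝ {p : X × ℝ | ψ p.1 ≤ (p.2 : EReal)})
    (hlsc : LowerSemicontinuous ψ)
    (H : ∀ u : X, ∀ u' : X →L[ℝ] ℝ, (u, u') ∈ subdiff ψ → 0 ≤ u' u)
    {ε : ℝ} (hε : 0 < ε) :
    ∃ (xb : X) (rb : ℝ), ψ xb = (rb : EReal) ∧ ‖xb‖ ≤ 2*ε ∧
      ∀ y, ((rb - (‖xb‖ + ε) * ‖y - xb‖ : ℝ) : EReal) ≤ ψ y := by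
  classical
  obtain ⟨g, c, hgc⟩ := exists_affine_minorant ψ hbot hx₀ hEconv (epi_closed ψ hlsc)
  set f : X → EReal := fun x => ψ x + ((‖x‖^2/2 : ℝ) : EReal) with hf
  set B₀ : ℝ := c - ‖g‖^2/2 with hB₀
  have hfB : ∀ x, (B₀ : EReal) ≤ f x := by
    intro x
    have h1 : -(‖g‖ * ‖x‖) ≤ g x := neg_le_of_abs_le (g.le_opNorm x)
    have h2 : B₀ ≤ g x + c + ‖x‖^2/2 := by nlinarith [sq_nonneg (‖x‖ - ‖g‖)]
    calc (B₀ : EReal) ≤ ((g x + c + ‖x‖^2/2 : ℝ) : EReal) := by exact_mod_cast h2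
      _ = ((g x + c : ℝ) : EReal) + ((‖x‖^2/2 : ℝ) : EReal) := by
          rw [← EReal.coe_add]
      _ ≤ ψ x + ((‖x‖^2/2 : ℝ) : EReal) := add_le_add (hgc x) le_rfl
  have hflsc : LowerSemicontinuous f :=
    lsc_add_cont ψ hlsc hbot _ ((continuous_norm.pow 2).div_const 2)
  clear_value f
  set s₀ : ℝ := (ψ x₀).toReal with hs₀
  have hψx₀ : ψ x₀ = (s₀ : EReal) := (EReal.coe_toReal hx₀ (hbot x₀)).symm
  have hfx₀ : f x₀ = ((s₀ + ‖x₀‖^2/2 : ℝ) : EReal) := by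
    rw [hf]; simp only; rw [hψx₀, ← EReal.coe_add]
  set M : ℝ := s₀ + ‖x₀‖^2/2 + 1 with hM
  set F : X → ℝ := fun x => (min (f x) ((M:ℝ):EReal)).toReal with hF
  have hFlsc : LowerSemicontinuous F := lsc_trunc hflsc hfB
  clear_value F
  have hminbot : ∀ x, min (f x) ((M:ℝ):EReal) ≠ ⊥ := by
    intro x
    have : ((min B₀ M : ℝ) : EReal) ≤ min (f x) ((M:ℝ):EReal) := by
      apply le_min
      · exact le_trans (by exact_mod_cast min_le_left B₀ M) (hfB x)
      · exact_mod_cast min_le_right B₀ M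
    exact ne_bot_of_le_ne_bot (EReal.coe_ne_bot _) this
  have hmintop : ∀ x, min (f x) ((M:ℝ):EReal) ≠ ⊤ := fun x =>
    ne_top_of_le_ne_top (EReal.coe_ne_top M) (min_le_right _ _)
  have hFlow : ∀ x, min B₀ M ≤ F x := by
    intro x
    have h1 : ((min B₀ M : ℝ) : EReal) ≤ min (f x) ((M:ℝ):EReal) := by
      apply le_min
      · exact le_trans (by exact_mod_cast min_le_left B₀ M) (hfB x)
      · exact_mod_cast min_le_right B₀ M
    have := EReal.toReal_le_toReal h1 (EReal.coe_ne_bot _) (hmintop x)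
    rw [EReal.toReal_coe] at this
    rw [hF]
    exact this
  have hFf : ∀ x, ((F x : ℝ) : EReal) ≤ f x := by
    intro x
    rw [hF]; simp only
    rw [EReal.coe_toReal (hmintop x) (hminbot x)]
    exact min_le_left _ _
  have hFx₀ : F x₀ = s₀ + ‖x₀‖^2/2 := by
    rw [hF]; simp only
    rw [hfx₀, min_eq_left (by exact_mod_cast (by linarith : s₀ + ‖x₀‖^2/2 ≤ M)),
      EReal.toReal_coe]
  obtain ⟨xb, hxb1, hxb2⟩ := my_ekeland hFlsc hFlow hε x₀
  -- f xb is finite and equals F xb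
  have hfxb : f xb = ((F xb : ℝ) : EReal) := by
    rcases le_or_gt (f xb) ((M:ℝ):EReal) with hle | hlt
    · rw [hF]; simp only
      rw [min_eq_left hle]
      have hne1 : f xb ≠ ⊤ := ne_top_of_le_ne_top (EReal.coe_ne_top M) hle
      have hne2 : f xb ≠ ⊥ := ne_bot_of_le_ne_bot (EReal.coe_ne_bot B₀) (hfB xb)
      rw [EReal.coe_toReal hne1 hne2]
    · exfalso
      have : F xb = M := by
        rw [hF]; simp only
        rw [min_eq_right hlt.le, EReal.toReal_coe]
      rw [this, hFx₀] at hxb1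
      linarith
  set rψ : ℝ := F xb - ‖xb‖^2/2 with hrψ
  have hψxb : ψ xb = (rψ : EReal) := by
    have h1 : ψ xb + ((‖xb‖^2/2 : ℝ):EReal) = ((F xb : ℝ) : EReal) := by
      rw [← hfxb, hf]
    exact le_antisymm ((ereal_add_coe_le_coe _ _ _).mp h1.le)
      ((ereal_coe_le_add_coe _ _ _).mp h1.ge)
  clear_value rψ
  set h : X → ℝ := fun y => ‖y‖^2/2 + ε * ‖y - xb‖ with hh
  have hhxb : h xb = ‖xb‖^2/2 := by rw [hh]; simp
  clear_value h
  have hglob : ∀ y, ((rψ + h xb : ℝ) : EReal) ≤ ψ y + ((h y : ℝ) : EReal) := by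
    intro y
    have h1 : F xb ≤ F y + ε * ‖y - xb‖ := hxb2 y
    have h2 : rψ + h xb = F xb := by rw [hhxb, hrψ]; ring
    calc ((rψ + h xb : ℝ) : EReal) = ((F xb : ℝ) : EReal) := by rw [h2]
      _ ≤ ((F y + ε * ‖y - xb‖ : ℝ) : EReal) := by exact_mod_cast h1
      _ = ((F y : ℝ) : EReal) + ((ε * ‖y - xb‖ : ℝ) : EReal) := by rw [← EReal.coe_add]
      _ ≤ f y + ((ε * ‖y - xb‖ : ℝ) : EReal) := add_le_add (hFf y) le_rfl
      _ = ψ y + (((‖y‖^2/2 : ℝ) : EReal) + ((ε * ‖y - xb‖ : ℝ) : EReal)) := by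
          rw [hf]; simp only [add_assoc]
      _ = ψ y + ((h y : ℝ) : EReal) := by rw [← EReal.coe_add, hh]
  -- convexity of h
  have hconvh : ∀ p q : X, ∀ a b : ℝ, 0 ≤ a → 0 ≤ b → a + b = 1 →
      h (a • p + b • q) ≤ a * h p + b * h q := by
    intro p q a b ha hb hab
    obtain rfl : b = 1 - a := by linarith
    have hn1 : ‖a • p + (1-a) • q‖ ≤ a * ‖p‖ + (1-a) * ‖q‖ := by
      calc ‖a • p + (1-a) • q‖ ≤ ‖a • p‖ + ‖(1-a) • q‖ := norm_add_le _ _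
        _ = a * ‖p‖ + (1-a) * ‖q‖ := by
            rw [norm_smul, norm_smul, Real.norm_eq_abs, Real.norm_eq_abs,
              abs_of_nonneg ha, abs_of_nonneg hb]
    have hn2 : ‖(a • p + (1-a) • q) - xb‖ ≤ a * ‖p - xb‖ + (1-a) * ‖q - xb‖ := by
      have heq : (a • p + (1-a) • q) - xb = a • (p - xb) + (1-a) • (q - xb) := by
        have hxbeq : xb = a • xb + (1-a) • xb := by rw [← add_smul]; simp
        calc (a • p + (1-a) • q) - xb = (a • p + (1-a) • q) - (a • xb + (1-a) • xb) := by
              rw [← hxbeq]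
          _ = a • (p - xb) + (1-a) • (q - xb) := by rw [smul_sub, smul_sub]; abel
      rw [heq]
      calc ‖a • (p - xb) + (1-a) • (q - xb)‖
          ≤ ‖a • (p - xb)‖ + ‖(1-a) • (q - xb)‖ := norm_add_le _ _
        _ = a * ‖p - xb‖ + (1-a) * ‖q - xb‖ := by
            rw [norm_smul, norm_smul, Real.norm_eq_abs, Real.norm_eq_abs,
              abs_of_nonneg ha, abs_of_nonneg hb]
    rw [hh]; simp only
    have hsq : ‖a • p + (1-a) • q‖^2/2 ≤ a * (‖p‖^2/2) + (1-a) * (‖q‖^2/2) := by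
      have h0 : ‖a • p + (1-a) • q‖^2 ≤ (a * ‖p‖ + (1-a) * ‖q‖)^2 := by
        apply sq_le_sq' _ hn1
        have := norm_nonneg (a • p + (1-a) • q)
        nlinarith [mul_nonneg ha (norm_nonneg p), mul_nonneg hb (norm_nonneg q)]
      have key : (a * ‖p‖ + (1-a) * ‖q‖)^2 ≤ a * ‖p‖^2 + (1-a) * ‖q‖^2 := by
        nlinarith [mul_nonneg (mul_nonneg ha hb) (sq_nonneg (‖p‖ - ‖q‖))]
      linarith
    have hlin : ε * ‖(a • p + (1-a) • q) - xb‖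
        ≤ a * (ε * ‖p - xb‖) + (1-a) * (ε * ‖q - xb‖) := by
      have := mul_le_mul_of_nonneg_left hn2 hε.le
      nlinarith
    linarith
  -- the two convex sets
  set A : Set (X × ℝ) := {p | ψ p.1 ≤ ((rψ + p.2 : ℝ) : EReal)} with hA
  set Bs : Set (X × ℝ) := {p | p.2 < h xb - h p.1} with hBs
  have hAconv : Convex ℝ A := by
    rintro ⟨p1, p2⟩ hp ⟨q1, q2⟩ hq a b ha hb hab
    have h1 : ((p1, rψ + p2) : X × ℝ) ∈ {p : X × ℝ | ψ p.1 ≤ (p.2 : EReal)} := hp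
    have h2 : ((q1, rψ + q2) : X × ℝ) ∈ {p : X × ℝ | ψ p.1 ≤ (p.2 : EReal)} := hq
    have h3 := hEconv h1 h2 ha hb hab
    simp only [Prod.smul_mk, Prod.mk_add_mk, smul_eq_mul, Set.mem_setOf_eq] at h3 ⊢
    have heq : a * (rψ + p2) + b * (rψ + q2) = rψ + (a * p2 + b * q2) := by
      linear_combination rψ * hab
    rwa [heq] at h3
  have hBconv : Convex ℝ Bs := by
    rintro ⟨p1, p2⟩ hp ⟨q1, q2⟩ hq a b ha hb hab
    simp only [hBs, Set.mem_setOf_eq, Prod.smul_mk, Prod.mk_add_mk, smul_eq_mul] at hp hq ⊢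
    have hc := hconvh p1 q1 a b ha hb hab
    have h1 : a * p2 ≤ a * (h xb - h p1) := mul_le_mul_of_nonneg_left hp.le ha
    have h2 : b * q2 ≤ b * (h xb - h q1) := mul_le_mul_of_nonneg_left hq.le hb
    have hstrict : a * p2 + b * q2 < a * (h xb - h p1) + b * (h xb - h q1) := by
      by_cases hb0 : 0 < b
      · exact add_lt_add_of_le_of_lt h1 (mul_lt_mul_of_pos_left hq hb0)
      · have hb' : b = 0 := le_antisymm (not_lt.mp hb0) hb
        have ha' : a = 1 := by rw [hb'] at hab; linarith
        rw [ha', hb']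
        simpa using hp
    have : a * (h xb - h p1) + b * (h xb - h q1) = h xb - (a * h p1 + b * h q1) := by
      linear_combination (h xb) * hab
    rw [this] at hstrict
    calc a * p2 + b * q2 < h xb - (a * h p1 + b * h q1) := hstrict
      _ ≤ h xb - h (a • p1 + b • q1) := by linarith
  have hconth : Continuous h := by
    rw [hh]
    exact ((continuous_norm.pow 2).div_const 2).add
      (continuous_const.mul ((continuous_id.sub continuous_const).norm))
  have hBopen : IsOpen Bs :=
    isOpen_lt continuous_snd (continuous_const.sub (hconth.comp continuous_fst))
  have hdisj : Disjoint Bs A := by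
    rw [Set.disjoint_left]
    rintro ⟨p1, p2⟩ hpB hpA
    simp only [hBs, Set.mem_setOf_eq] at hpB
    simp only [hA, Set.mem_setOf_eq] at hpA
    have h1 : ((rψ + h xb : ℝ) : EReal) ≤ ((rψ + p2 + h p1 : ℝ) : EReal) := by
      calc ((rψ + h xb : ℝ) : EReal) ≤ ψ p1 + ((h p1 : ℝ) : EReal) := hglob p1
        _ ≤ ((rψ + p2 : ℝ) : EReal) + ((h p1 : ℝ) : EReal) := add_le_add hpA le_rfl
        _ = ((rψ + p2 + h p1 : ℝ) : EReal) := by rw [← EReal.coe_add]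
    rw [EReal.coe_le_coe_iff] at h1
    linarith
  obtain ⟨L, u, hLB, hLA⟩ := geometric_hahn_banach_open hBconv hBopen hAconv hdisj
  set c₀ : ℝ := L (0, 1) with hc₀
  have hA' : ∀ (y : X) (t : ℝ), ψ y ≤ ((rψ + t : ℝ) : EReal) → u ≤ L (y, 0) + t * c₀ := by
    intro y t hyt
    have := hLA (y, t) hyt
    rwa [decomp] at this
  have hB' : ∀ (y : X) (t : ℝ), t < h xb - h y → L (y, 0) + t * c₀ < u := by
    intro y t hyt
    have := hLB (y, t) hyt
    rwa [decomp] at this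
  have hc₀pos : 0 < c₀ := by
    have h1 : u ≤ L (xb, 0) := by
      have := hA' xb 0 (by rw [hψxb]; exact_mod_cast (by linarith : rψ ≤ rψ + 0))
      simpa using this
    have h2 : L (xb, 0) + (-1) * c₀ < u := hB' xb (-1) (by rw [sub_self]; norm_num)
    linarith
  -- the two fundamental inequalities
  have hi : ∀ y, ((rψ + (u - L (y, 0))/c₀ : ℝ) : EReal) ≤ ψ y := by
    intro y
    by_cases htop : ψ y = ⊤
    · rw [htop]; exact le_top
    · obtain ⟨ρ, hψy⟩ : ∃ ρ : ℝ, ψ y = (ρ : EReal) :=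
        ⟨(ψ y).toReal, (EReal.coe_toReal htop (hbot y)).symm⟩
      have h1 : ψ y ≤ ((rψ + (ρ - rψ) : ℝ) : EReal) := by
        rw [hψy]; norm_cast; linarith
      have h2 := hA' y _ h1
      have h3 : (u - L (y, 0))/c₀ ≤ ρ - rψ := by
        rw [div_le_iff₀ hc₀pos]; linarith
      rw [hψy]
      exact_mod_cast (by linarith : rψ + (u - L (y, 0))/c₀ ≤ ρ)
  have hii : ∀ y, h xb - h y ≤ (u - L (y, 0))/c₀ := by
    intro y
    apply le_of_forall_lt
    intro t ht
    have := hB' y t ht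
    rw [lt_div_iff₀ hc₀pos]
    linarith
  have hu : u = L (xb, 0) := by
    have h1 : (u - L (xb, 0))/c₀ ≤ 0 := by
      have := hi xb
      rw [hψxb, EReal.coe_le_coe_iff] at this
      linarith
    have h2 : 0 ≤ (u - L (xb, 0))/c₀ := by
      have := hii xb
      rwa [sub_self] at this
    have h3 : (u - L (xb, 0))/c₀ = 0 := le_antisymm h1 h2
    rw [div_eq_iff (ne_of_gt hc₀pos), zero_mul] at h3
    linarith
  set u' : X →L[ℝ] ℝ := (-(c₀⁻¹)) • (L.comp (ContinuousLinearMap.inl ℝ X ℝ)) with hu'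
  have hu'app : ∀ w, u' w = -(c₀⁻¹) * L (w, 0) := by
    intro w
    simp [hu', ContinuousLinearMap.smul_apply, ContinuousLinearMap.comp_apply]
  have hlin : ∀ y, u' (y - xb) = (u - L (y, 0))/c₀ := by
    intro y
    have h1 : L (y - xb, 0) = L (y, 0) - L (xb, 0) := by
      have : ((y - xb, (0:ℝ)) : X × ℝ) = (y, 0) - (xb, 0) := by simp [Prod.ext_iff]
      rw [this, map_sub]
    rw [hu'app, h1, hu]
    field_simp
    ring
  have hsub : ((xb, u') : X × (X →L[ℝ] ℝ)) ∈ subdiff ψ := by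
    intro y
    simp only
    rw [hψxb, ← EReal.coe_add, hlin]
    have := hi y
    have heq : (u - L (y, 0))/c₀ + rψ = rψ + (u - L (y, 0))/c₀ := by ring
    rw [heq]
    exact this
  have hmon : 0 ≤ u' xb := H xb u' hsub
  have hxbnorm : ‖xb‖ ≤ 2*ε := by
    have h1 := hii 0
    have h2 : u' (0 - xb) = (u - L (0, 0))/c₀ := hlin 0
    have h3 : u' (0 - xb) = -u' xb := by rw [zero_sub, map_neg]
    have h4 : h 0 = ε * ‖xb‖ := by simp [hh]
    rw [hhxb, h4, ← h2, h3] at h1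
    nlinarith [norm_nonneg xb]
  have hptw : ∀ w, u' w ≤ (‖xb‖ + ε) * ‖w‖ := by
    intro w
    apply le_of_forall_pos_le_add
    intro δ hδ
    set t : ℝ := 2*δ/(‖w‖^2 + 1) with ht0
    have ht : 0 < t := by positivity
    have h1 := hii (xb - t • w)
    have h2 : u' ((xb - t • w) - xb) = (u - L (xb - t • w, 0))/c₀ := hlin _
    have h3 : (xb - t • w) - xb = -(t • w) := by abel
    have h4 : u' (-(t • w)) = -(t * u' w) := by rw [map_neg, map_smul]; simp
    rw [← h2, h3, h4] at h1
    have h5 : h (xb - t • w) = ‖xb - t • w‖^2/2 + ε * (t * ‖w‖) := by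
      rw [hh]; simp only
      congr 1
      rw [show xb - t • w - xb = -(t • w) by abel, norm_neg, norm_smul,
        Real.norm_eq_abs, abs_of_pos ht]
    have h6 : ‖xb - t • w‖ ≤ ‖xb‖ + t * ‖w‖ := by
      calc ‖xb - t • w‖ ≤ ‖xb‖ + ‖t • w‖ := norm_sub_le _ _
        _ = ‖xb‖ + t * ‖w‖ := by rw [norm_smul, Real.norm_eq_abs, abs_of_pos ht]
    have h7 : ‖xb - t • w‖^2 ≤ (‖xb‖ + t * ‖w‖)^2 := by
      apply sq_le_sq' _ h6
      have := norm_nonneg (xb - t • w)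
      nlinarith [norm_nonneg xb, mul_nonneg ht.le (norm_nonneg w)]
    rw [hhxb, h5] at h1
    -- h1 : ‖xb‖^2/2 - (‖xb-tw‖^2/2 + ε t ‖w‖) ≤ -(t * u' w)
    have h8 : t * u' w ≤ t * ((‖xb‖ + ε) * ‖w‖) + t * (t * ‖w‖^2/2) := by nlinarith
    have h9 : u' w ≤ (‖xb‖ + ε) * ‖w‖ + t * ‖w‖^2/2 :=
      le_of_mul_le_mul_left (by nlinarith) ht
    have h10 : t * ‖w‖^2/2 ≤ δ := by
      rw [ht0]
      rw [div_mul_eq_mul_div, div_div, div_le_iff₀ (by positivity)]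
      nlinarith [sq_nonneg ‖w‖]
    linarith
  refine ⟨xb, rψ, hψxb, hxbnorm, fun y => ?_⟩
  have h1 := hsub y
  simp only at h1
  rw [hψxb, ← EReal.coe_add] at h1
  have h2 : u' (y - xb) ≥ -((‖xb‖ + ε) * ‖y - xb‖) := by
    have := hptw (-(y - xb))
    rw [map_neg, norm_neg] at this
    linarith
  refine le_trans ?_ h1
  exact_mod_cast (by linarith : rψ - (‖xb‖ + ε) * ‖y - xb‖ ≤ u' (y - xb) + rψ)

lemma add_coe_ne_bot (a : EReal) (ha : a ≠ ⊥) (r : ℝ) : a + (r:EReal) ≠ ⊥ := by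
  induction a using EReal.rec with
  | bot => exact absurd rfl ha
  | top => rw [EReal.top_add_coe]; exact top_ne_bot
  | coe x => rw [← EReal.coe_add]; exact EReal.coe_ne_bot _

lemma add_coe_ne_top (a : EReal) (ha : a ≠ ⊤) (r : ℝ) : a + (r:EReal) ≠ ⊤ := by
  induction a using EReal.rec with
  | bot => rw [EReal.bot_add]; exact bot_ne_top
  | top => exact absurd rfl ha
  | coe x => rw [← EReal.coe_add]; exact EReal.coe_ne_top _

lemma key_lemma (ψ : X → EReal) (hbot : ∀ x, ψ x ≠ ⊥) {x₀ : X} (hx₀ : ψ x₀ ≠ ⊤)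
    (hEconv : Convex ℝ {p : X × ℝ | ψ p.1 ≤ (p.2 : EReal)})
    (hlsc : LowerSemicontinuous ψ)
    (H : ∀ u : X, ∀ u' : X →L[ℝ] ℝ, (u, u') ∈ subdiff ψ → 0 ≤ u' u) :
    ∀ y, ψ 0 ≤ ψ y := by
  intro y
  by_cases hy : ψ y = ⊤
  · rw [hy]; exact le_top
  obtain ⟨R, hR⟩ : ∃ R : ℝ, ψ y = (R:EReal) := ⟨_, (EReal.coe_toReal hy (hbot y)).symm⟩
  rw [hR]
  by_contra hcon
  push_neg at hcon
  obtain ⟨cc, hc1, hc2⟩ := EReal.exists_between_coe_real hcon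
  have hcle : cc ≤ R := by
    apply le_of_forall_pos_le_add
    intro δ hδ
    have h0 := hlsc 0 (cc : EReal) hc2
    obtain ⟨ρ, hρpos, hρ⟩ := Metric.eventually_nhds_iff.mp h0
    set ε : ℝ := min (min 1 (ρ/3)) (δ/(3*(‖y‖+2))) with hεdef
    have hεpos : 0 < ε := by
      apply lt_min (lt_min one_pos (by positivity))
      have : (0:ℝ) < ‖y‖ + 2 := by positivity
      positivity
    obtain ⟨xb, rb, hψxb, hxbn, hbd⟩ := approx ψ hbot hx₀ hEconv hlsc H hεpos
    have hεle1 : ε ≤ 1 := le_trans (min_le_left _ _) (min_le_left _ _)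
    have hερ : ε ≤ ρ/3 := le_trans (min_le_left _ _) (min_le_right _ _)
    have hεδ : ε ≤ δ/(3*(‖y‖+2)) := min_le_right _ _
    have h1 : (cc : EReal) < ψ xb := by
      apply hρ
      rw [dist_eq_norm, sub_zero]
      linarith
    rw [hψxb] at h1
    have h1' : cc < rb := by exact_mod_cast h1
    have h2 := hbd y
    rw [hR] at h2
    have h2' : rb - (‖xb‖ + ε) * ‖y - xb‖ ≤ R := by exact_mod_cast h2
    have h3 : ‖y - xb‖ ≤ ‖y‖ + 2 := by
      calc ‖y - xb‖ ≤ ‖y‖ + ‖xb‖ := norm_sub_le _ _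
        _ ≤ ‖y‖ + 2 := by linarith [hxbn]
    have h4 : (‖xb‖ + ε) * ‖y - xb‖ ≤ 3*ε * (‖y‖ + 2) := by
      apply mul_le_mul (by linarith) h3 (norm_nonneg _) (by positivity)
    have h5 : 3*ε * (‖y‖ + 2) ≤ δ := by
      have hpos : (0:ℝ) < 3*(‖y‖+2) := by positivity
      calc 3*ε * (‖y‖ + 2) = ε * (3*(‖y‖+2)) := by ring
        _ ≤ (δ/(3*(‖y‖+2))) * (3*(‖y‖+2)) :=
            mul_le_mul_of_nonneg_right hεδ (le_of_lt hpos)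
        _ = δ := by field_simp
    linarith
  exact absurd hc1 (by exact_mod_cast not_lt.mpr hcle)

/-- the subdifferential of a proper convex l.s.c. function is maximal monotone. -/
theorem subdiff_maximalMonotone (φ : X → EReal) (hproper : ProperFn φ)
    (hconv : ERealConvexOn φ) (hlsc : LowerSemicontinuous φ) :
    ∀ p : X × (X →L[ℝ] ℝ),
      (∀ q ∈ subdiff φ, 0 ≤ (p.2 - q.2) (p.1 - q.1)) → p ∈ subdiff φ := by
  rintro ⟨z, z'⟩ Hmono
  obtain ⟨hbot, x₁, hx₁⟩ := hproper
  set ψ : X → EReal := fun x => φ (x + z) + ((-(z' x) : ℝ) : EReal) with hψ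
  have hbotψ : ∀ x, ψ x ≠ ⊥ := fun x => add_coe_ne_bot _ (hbot _) _
  have hx₀ψ : ψ (x₁ - z) ≠ ⊤ := by
    rw [hψ]; simp only
    rw [show x₁ - z + z = x₁ from by abel]
    exact add_coe_ne_top _ hx₁ _
  have hmem : ∀ (y : X) (t : ℝ), ψ y ≤ (t : EReal) ↔ φ (y + z) ≤ ((t + z' y : ℝ) : EReal) := by
    intro y t
    rw [hψ]; simp only
    rw [ereal_add_coe_le_coe]
    constructor <;> intro hh <;> (refine le_trans hh ?_) <;> (apply le_of_eq; norm_cast; ring)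
  have hEφ : Convex ℝ {p : X × ℝ | φ p.1 ≤ (p.2 : EReal)} := epi_convex φ hconv
  have hEconvψ : Convex ℝ {p : X × ℝ | ψ p.1 ≤ (p.2 : EReal)} := by
    rintro ⟨p1, p2⟩ hp ⟨q1, q2⟩ hq a b ha hb hab
    simp only [Set.mem_setOf_eq] at hp hq ⊢
    rw [hmem] at hp hq
    have h1 : ((p1 + z, p2 + z' p1) : X × ℝ) ∈ {p : X × ℝ | φ p.1 ≤ (p.2 : EReal)} := hp
    have h2 : ((q1 + z, q2 + z' q1) : X × ℝ) ∈ {p : X × ℝ | φ p.1 ≤ (p.2 : EReal)} := hq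
    have h3 := hEφ h1 h2 ha hb hab
    simp only [Prod.smul_mk, Prod.mk_add_mk, smul_eq_mul, Set.mem_setOf_eq] at h3
    show ψ (a • p1 + b • q1) ≤ ((a • p2 + b • q2 : ℝ) : EReal)
    simp only [smul_eq_mul]
    rw [hmem]
    have harg : a • (p1 + z) + b • (q1 + z) = a • p1 + b • q1 + z := by
      calc a • (p1 + z) + b • (q1 + z) = a • p1 + b • q1 + (a • z + b • z) := by
            rw [smul_add, smul_add]; abel
        _ = a • p1 + b • q1 + z := by rw [← add_smul, hab, one_smul]
    rw [harg] at h3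
    have hval : a * (p2 + z' p1) + b * (q2 + z' q1)
        = a * p2 + b * q2 + z' (a • p1 + b • q1) := by
      rw [map_add, map_smul, map_smul]
      simp only [smul_eq_mul]
      ring
    rw [hval] at h3
    exact h3
  have hlscψ : LowerSemicontinuous ψ := by
    rw [hψ]
    exact lsc_add_cont (fun x => φ (x + z))
      (hlsc.comp (continuous_id.add continuous_const))
      (fun x => hbot _) (fun x => -(z' x)) (z'.continuous.neg)
  have Hψ : ∀ u : X, ∀ u' : X →L[ℝ] ℝ, (u, u') ∈ subdiff ψ → 0 ≤ u' u := by
    intro u u' hsub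
    have hq : ((u + z, u' + z') : X × (X →L[ℝ] ℝ)) ∈ subdiff φ := by
      intro w
      simp only
      have h1 := hsub (w - z)
      simp only [hψ] at h1
      rw [show w - z + z = w from by abel] at h1
      -- h1 : ↑(u' (w - z - u)) + (φ (u + z) + ↑(-(z' u))) ≤ φ w + ↑(-(z' (w - z)))
      have rearr : ∀ (s t : ℝ) (B : EReal),
          (s:EReal) + (B + (t:EReal)) = ((s + t : ℝ):EReal) + B := by
        intro s t B
        rw [EReal.coe_add, add_comm B, ← add_assoc]
      rw [rearr] at h1
      rw [ereal_shuffle] at h1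
      have hval : u' (w - z - u) + -(z' u) - -(z' (w - z)) = (u' + z') (w - (u + z)) := by
        simp only [ContinuousLinearMap.add_apply, map_sub, map_add]
        ring
      rwa [hval] at h1
    have := Hmono _ hq
    simp only at this
    have harg : z - (u + z) = -u := by abel
    rw [harg] at this
    simp only [ContinuousLinearMap.sub_apply, ContinuousLinearMap.add_apply, map_neg] at this
    linarith
  have hkey := key_lemma ψ hbotψ hx₀ψ hEconvψ hlscψ Hψ
  intro w
  simp only
  have h1 := hkey (w - z)
  simp only [hψ] at h1
  rw [show w - z + z = w from by abel, zero_add, map_zero, neg_zero] at h1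
  rw [show ((0:ℝ):EReal) = (0:EReal) from rfl, add_zero] at h1
  -- h1 : φ z ≤ φ w + ↑(-(z' (w - z)))
  have h2 : ((0:ℝ):EReal) + φ z ≤ φ w + ((-(z' (w - z)) : ℝ) : EReal) := by
    rw [show ((0:ℝ):EReal) = (0:EReal) from rfl, zero_add]; exact h1
  rw [ereal_shuffle] at h2
  have : (0 : ℝ) - -(z' (w - z)) = z' (w - z) := by ring
  rwa [this] at h2
end
end

section
/- Let X be a reflexive real Banach space and φ : X → (-∞, +∞] proper convex lower semicontinuous. Then for all λ > 0, R(J_X + λ∂φ) = X*: for every z* ∈ X* there exist x₀ ∈ X, y* ∈ J_X(x₀), x* ∈ ∂φ(x₀) with z* = y* + λx*. -/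
noncomputable section

variable {X : Type*} [NormedAddCommGroup X] [NormedSpace ℝ X] [CompleteSpace X]

/-! ### Auxiliary lemmas -/

open NormedSpace Set Metric

/-- The weak topology on a normed space, as an explicit topology on the same carrier. -/
abbrev wkt (X : Type*) [NormedAddCommGroup X] [NormedSpace ℝ X] : TopologicalSpace X :=
  (inferInstance : TopologicalSpace (WeakSpace ℝ X))

section WeakAux

variable {Y : Type*} [NormedAddCommGroup Y] [NormedSpace ℝ Y]

lemma wkt_cont (f : Y →L[ℝ] ℝ) : @Continuous Y ℝ (wkt Y) _ f :=
  WeakBilin.eval_continuous ((topDualPairing ℝ Y).flip) f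

/-- Mazur: a norm-closed convex set is weakly closed. -/
lemma mazur {s : Set Y} (hs : Convex ℝ s) (hc : IsClosed s) : @IsClosed Y (wkt Y) s := by
  rw [← @isOpen_compl_iff Y _ (wkt Y)]
  rw [@isOpen_iff_forall_mem_open Y (wkt Y) sᶜ]
  intro x hx
  obtain ⟨f, u, hfs, hfx⟩ := geometric_hahn_banach_closed_point hs hc hx
  refine ⟨f ⁻¹' Ioi u, fun y hy hys => absurd (hfs y hys) (not_lt.2 (le_of_lt hy)), ?_, hfx⟩
  exact (@IsOpen.preimage Y ℝ (wkt Y) _ f (wkt_cont f) _ isOpen_Ioi)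

lemma norm_incl (x : Y) : ‖inclusionInDoubleDual ℝ Y x‖ = ‖x‖ :=
  (inclusionInDoubleDualLi ℝ (E := Y)).norm_map x

/-- Reflexivity: closed balls are compact for the weak topology. -/
lemma ball_wcompact (hrefl : Function.Surjective (inclusionInDoubleDual ℝ Y)) (R : ℝ) :
    @IsCompact Y (wkt Y) (closedBall (0 : Y) R) := by
  set ι := inclusionInDoubleDual ℝ Y with hι
  have hinj : Function.Injective ι := by
    intro a b hab
    have : ‖a - b‖ = 0 := by rw [← norm_incl (a - b), map_sub, hab, sub_self]; exact @norm_zero (StrongDual ℝ (StrongDual ℝ Y)) _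
    simpa [sub_eq_zero] using norm_eq_zero.mp this
  set g : WeakDual ℝ (StrongDual ℝ Y) → Y := fun F => Function.surjInv hrefl F with hg
  have hgι : ∀ F, ι (g F) = F := fun F => Function.surjInv_eq hrefl F
  have hcg : @Continuous _ Y _ (wkt Y) g := by
    apply WeakBilin.continuous_of_continuous_eval
    intro y
    have : (fun F : WeakDual ℝ (StrongDual ℝ Y) => ((topDualPairing ℝ Y).flip) (g F) y)
        = fun F : WeakDual ℝ (StrongDual ℝ Y) => F y := by
      funext F
      show (ι (g F)) y = F y
      rw [hgι]
      rfl
    rw [this]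
    exact WeakDual.eval_continuous y
  have hS : IsCompact (WeakDual.toStrongDual ⁻¹' closedBall 0 R : Set (WeakDual ℝ (StrongDual ℝ Y))) :=
    WeakDual.isCompact_closedBall (𝕜 := ℝ) (E := StrongDual ℝ Y) 0 R
  have himg : closedBall (0 : Y) R = g '' (WeakDual.toStrongDual ⁻¹' closedBall 0 R) := by
    ext x
    simp only [mem_closedBall, dist_zero_right, mem_image, mem_preimage]
    constructor
    · intro hx
      refine ⟨ι x, ?_, hinj (hgι (ι x))⟩
      refine (dist_zero_right (ι x)).trans_le ?_
      show ‖ι x‖ ≤ R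
      rwa [norm_incl]
    · rintro ⟨F, hF, rfl⟩
      have h2 : ‖ι (g F)‖ ≤ R := by
        have := hgι F
        rw [this]
        replace hF := (dist_zero_right (WeakDual.toStrongDual F)).symm.trans_le hF
        exact hF
      rwa [norm_incl] at h2
  rw [himg]
  exact @IsCompact.image _ Y _ (wkt Y) _ _ hS hcg

/-- Continuity of functionals on `Y × ℝ` for the (weak × standard) topology. -/
lemma wktp_cont (f : (Y × ℝ) →L[ℝ] ℝ) :
    @Continuous (Y × ℝ) ℝ (@instTopologicalSpaceProd Y ℝ (wkt Y) _) _ f := by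
  set g₁ : Y →L[ℝ] ℝ := f.comp (ContinuousLinearMap.inl ℝ Y ℝ) with hg₁
  have hrep : (f : (Y × ℝ) → ℝ)
      = fun p => g₁ p.1 + p.2 * f (0, 1) := by
    funext p
    have hp : p = ((p.1, (0:ℝ)) : Y × ℝ) + p.2 • ((0:Y), (1:ℝ)) := by
      apply Prod.ext <;> simp
    calc f p = f (((p.1, (0:ℝ)) : Y × ℝ) + p.2 • ((0:Y), (1:ℝ))) := by rw [← hp]
      _ = _ := by rw [map_add, map_smul, smul_eq_mul]; rfl
  rw [hrep]
  letI : TopologicalSpace Y := wkt Y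
  have h1 : Continuous fun p : Y × ℝ => g₁ p.1 := (wkt_cont g₁).comp continuous_fst
  have h2 : Continuous fun p : Y × ℝ => p.2 * f (0, 1) := continuous_snd.mul continuous_const
  exact h1.add h2

/-- Mazur in `Y × ℝ` with the (weak × standard) topology. -/
lemma mazur_prod {s : Set (Y × ℝ)} (hs : Convex ℝ s) (hc : IsClosed s) :
    @IsClosed (Y × ℝ) (@instTopologicalSpaceProd Y ℝ (wkt Y) _) s := by
  rw [← @isOpen_compl_iff (Y × ℝ) _ (@instTopologicalSpaceProd Y ℝ (wkt Y) _)]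
  rw [@isOpen_iff_forall_mem_open (Y × ℝ) (@instTopologicalSpaceProd Y ℝ (wkt Y) _) sᶜ]
  intro x hx
  obtain ⟨f, u, hfs, hfx⟩ := geometric_hahn_banach_closed_point hs hc hx
  refine ⟨f ⁻¹' Ioi u, fun y hy hys => absurd (hfs y hys) (not_lt.2 (le_of_lt hy)), ?_, hfx⟩
  exact (@IsOpen.preimage (Y × ℝ) ℝ (@instTopologicalSpaceProd Y ℝ (wkt Y) _) _ f (wktp_cont f) _ isOpen_Ioi)

lemma ball_prod_wcompact (hrefl : Function.Surjective (inclusionInDoubleDual ℝ Y)) (R : ℝ) :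
    @IsCompact (Y × ℝ) (@instTopologicalSpaceProd Y ℝ (wkt Y) _)
      (closedBall (0:Y) R ×ˢ closedBall (0:ℝ) R) := by
  letI : TopologicalSpace Y := wkt Y
  exact (ball_wcompact hrefl R).prod (isCompact_closedBall 0 R)

end WeakAux

/-- A function with closed sublevel sets attains its min on a nonempty compact set. -/
lemma lsc_min {T : Type*} [TopologicalSpace T] {K : Set T} (hK : IsCompact K)
    (hne : K.Nonempty) (G : T → ℝ) (hG : ∀ c : ℝ, IsClosed {p | G p ≤ c}) :
    ∃ p₀ ∈ K, ∀ p ∈ K, G p₀ ≤ G p := by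
  have h := hK.inter_iInter_nonempty (ι := K) (fun q => {p | G p ≤ G q.1})
    (fun q => hG _) ?_
  · obtain ⟨p₀, hp₀K, hp₀⟩ := h
    exact ⟨p₀, hp₀K, fun p hp => by simpa using mem_iInter.1 hp₀ ⟨p, hp⟩⟩
  · intro u
    rcases u.eq_empty_or_nonempty with rfl | hu
    · simpa using hne
    · obtain ⟨q, hq, hqmin⟩ := u.exists_min_image (fun q => G q.1) hu
      refine ⟨q.1, q.2, ?_⟩
      simp only [mem_iInter, mem_setOf_eq]
      intro i hi
      exact hqmin i hi

lemma le_of_forall_small {c K M : ℝ} (h : ∀ t : ℝ, 0 < t → t ≤ 1 → c ≤ K + t * M) :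
    c ≤ K := by
  by_contra hc
  push_neg at hc
  have hM : 0 < |M| + 1 := by positivity
  set t := min 1 ((c - K) / (2 * (|M| + 1))) with ht
  have htpos : 0 < t := lt_min one_pos (div_pos (by linarith) (by positivity))
  have ht1 : t ≤ 1 := min_le_left _ _
  have h2 : t * M ≤ t * |M| := by
    have := le_abs_self M
    nlinarith
  have h3 : t * (|M| + 1) ≤ (c - K) / 2 := by
    have : t ≤ (c - K) / (2 * (|M| + 1)) := min_le_right _ _
    calc t * (|M| + 1) ≤ ((c - K) / (2 * (|M| + 1))) * (|M| + 1) := by nlinarith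
      _ = (c - K) / 2 := by field_simp
  have := h t htpos ht1
  nlinarith

/-- A subgradient of `‖·‖²/2` at `x₀` belongs to the duality map. -/
lemma duality_of_subgrad {x₀ : X} {ℓ : X →L[ℝ] ℝ}
    (h : ∀ v : X, ℓ v ≤ ‖x₀ + v‖^2/2 - ‖x₀‖^2/2) :
    ℓ x₀ = ‖x₀‖^2 ∧ ‖x₀‖^2 = ‖ℓ‖^2 := by
  have key : ∀ t : ℝ, -1 ≤ t → t * ℓ x₀ ≤ (t + t^2/2) * ‖x₀‖^2 := by
    intro t ht
    have h1 := h (t • x₀)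
    rw [map_smul, smul_eq_mul] at h1
    have h2 : x₀ + t • x₀ = (1 + t) • x₀ := by rw [add_smul, one_smul]
    rw [h2, norm_smul, Real.norm_eq_abs, abs_of_nonneg (by linarith : (0:ℝ) ≤ 1 + t)] at h1
    nlinarith [h1]
  have hle : ℓ x₀ ≤ ‖x₀‖^2 := by
    apply le_of_forall_small (M := ‖x₀‖^2/2)
    intro t ht0 ht1
    have hk := key t (by linarith)
    have h3 : t * ℓ x₀ ≤ t * (‖x₀‖^2 + t * (‖x₀‖^2/2)) := by nlinarith
    exact le_of_mul_le_mul_left h3 ht0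
  have hge : ‖x₀‖^2 ≤ ℓ x₀ := by
    apply le_of_forall_small (M := ‖x₀‖^2/2)
    intro t ht0 ht1
    have hk := key (-t) (by linarith)
    have h3 : t * ‖x₀‖^2 ≤ t * (ℓ x₀ + t * (‖x₀‖^2/2)) := by nlinarith
    exact le_of_mul_le_mul_left h3 ht0
  have hx₀ : ℓ x₀ = ‖x₀‖^2 := le_antisymm hle hge
  have hbound : ∀ v : X, ℓ v ≤ ‖x₀‖ * ‖v‖ := by
    intro v
    apply le_of_forall_small (M := ‖v‖^2/2)
    intro t ht0 ht1
    have h1 := h (t • v)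
    rw [map_smul, smul_eq_mul] at h1
    have h2 : ‖x₀ + t • v‖ ≤ ‖x₀‖ + t * ‖v‖ := by
      calc ‖x₀ + t • v‖ ≤ ‖x₀‖ + ‖t • v‖ := norm_add_le _ _
        _ = ‖x₀‖ + t * ‖v‖ := by rw [norm_smul, Real.norm_eq_abs, abs_of_nonneg ht0.le]
    have h4 : ‖x₀ + t • v‖^2 ≤ (‖x₀‖ + t * ‖v‖)^2 :=
      pow_le_pow_left₀ (norm_nonneg _) h2 2
    have h5 : t * ℓ v ≤ t * (‖x₀‖ * ‖v‖ + t * (‖v‖^2/2)) := by nlinarith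
    exact le_of_mul_le_mul_left h5 ht0
  have hnorm_le : ‖ℓ‖ ≤ ‖x₀‖ := by
    apply ContinuousLinearMap.opNorm_le_bound _ (norm_nonneg x₀)
    intro v
    rw [Real.norm_eq_abs, abs_le]
    constructor
    · have h6 := hbound (-v)
      rw [map_neg, norm_neg] at h6
      linarith
    · exact hbound v
  have hnorm_ge : ‖x₀‖ ≤ ‖ℓ‖ := by
    rcases eq_or_lt_of_le (norm_nonneg x₀) with h0 | h0
    · rw [← h0]; exact norm_nonneg ℓ
    · have h1 : ‖x₀‖^2 ≤ ‖ℓ‖ * ‖x₀‖ := by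
        rw [← hx₀]
        calc ℓ x₀ ≤ |ℓ x₀| := le_abs_self _
          _ = ‖ℓ x₀‖ := (Real.norm_eq_abs _).symm
          _ ≤ ‖ℓ‖ * ‖x₀‖ := ℓ.le_opNorm x₀
      nlinarith
  exact ⟨hx₀, by rw [le_antisymm hnorm_le hnorm_ge]⟩

/-- Convex combination within the epigraph. -/
lemma conv_epi {φ : X → EReal} (hconv : ERealConvexOn φ) (hbot : ∀ x, φ x ≠ ⊥)
    {y₁ y₂ : X} {s₁ s₂ a b : ℝ} (ha : 0 ≤ a) (hb : 0 ≤ b) (hab : a + b = 1)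
    (h1 : φ y₁ ≤ (s₁ : EReal)) (h2 : φ y₂ ≤ (s₂ : EReal)) :
    φ (a • y₁ + b • y₂) ≤ ((a * s₁ + b * s₂ : ℝ) : EReal) := by
  have ht1 : φ y₁ ≠ ⊤ := ne_top_of_le_ne_top (EReal.coe_ne_top s₁) h1
  have ht2 : φ y₂ ≠ ⊤ := ne_top_of_le_ne_top (EReal.coe_ne_top s₂) h2
  set c₁ := (φ y₁).toReal with hc₁def
  set c₂ := (φ y₂).toReal with hc₂def
  have e1 : φ y₁ = (c₁ : EReal) := (EReal.coe_toReal ht1 (hbot y₁)).symm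
  have e2 : φ y₂ = (c₂ : EReal) := (EReal.coe_toReal ht2 (hbot y₂)).symm
  have hc1 : c₁ ≤ s₁ := by rw [e1] at h1; exact EReal.coe_le_coe_iff.mp h1
  have hc2 : c₂ ≤ s₂ := by rw [e2] at h2; exact EReal.coe_le_coe_iff.mp h2
  calc φ (a • y₁ + b • y₂) ≤ (a : EReal) * φ y₁ + (b : EReal) * φ y₂ :=
        hconv y₁ y₂ a b ha hb hab
    _ = ((a * c₁ + b * c₂ : ℝ) : EReal) := by
        rw [e1, e2, ← EReal.coe_mul, ← EReal.coe_mul, ← EReal.coe_add]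
    _ ≤ _ := by
        rw [EReal.coe_le_coe_iff]
        have g1 := mul_le_mul_of_nonneg_left hc1 ha
        have g2 := mul_le_mul_of_nonneg_left hc2 hb
        linarith

lemma bound_from_quad {r A B : ℝ} (hA : 0 ≤ A) (hr0 : 0 ≤ r) (h2 : r^2/2 ≤ A*r + B) :
    r ≤ 2*A + 1 + 2*|B| := by
  by_contra hcon
  push_neg at hcon
  have h1r : (1:ℝ) ≤ r := by have := abs_nonneg B; linarith
  nlinarith [mul_le_mul_of_nonneg_left hcon.le hr0,
    mul_le_mul_of_nonneg_left h1r (abs_nonneg B), le_abs_self B, abs_nonneg B,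
    mul_nonneg hA hr0]

set_option maxHeartbeats 2000000 in
/-- if `X` is reflexive then `R(J_X + λ∂φ) = X*`. -/
theorem surjectivity_subdiff
    (hrefl : Function.Surjective (NormedSpace.inclusionInDoubleDual ℝ X))
    (φ : X → EReal) (hproper : ProperFn φ)
    (hconv : ERealConvexOn φ) (hlsc : LowerSemicontinuous φ) :
    ∀ lam : ℝ, 0 < lam → ∀ z' : X →L[ℝ] ℝ,
      ∃ (x₀ : X) (y' x' : X →L[ℝ] ℝ),
        y' ∈ dualityMap x₀ ∧ (x₀, x') ∈ subdiff φ ∧ z' = y' + lam • x' := by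
  intro lam hlam z'
  obtain ⟨hbot, x₁, hx₁⟩ := hproper
  set r₁ : ℝ := (φ x₁).toReal with hr₁
  have hφx₁ : φ x₁ = (r₁ : EReal) := (EReal.coe_toReal hx₁ (hbot x₁)).symm
  set Epi : Set (X × ℝ) := {p | φ p.1 ≤ (p.2 : EReal)} with hEpidef
  have he₀ : ((x₁, r₁) : X × ℝ) ∈ Epi := by
    simp only [hEpidef, mem_setOf_eq, hφx₁]
    exact le_refl _
  have hEconv : Convex ℝ Epi := by
    rintro p hp q hq a b ha hb hab
    have := conv_epi hconv hbot ha hb hab hp hq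
    simpa [hEpidef, mem_setOf_eq, Prod.smul_fst, Prod.smul_snd, smul_eq_mul] using this
  have hEclosed : IsClosed Epi := by
    rw [← isOpen_compl_iff, isOpen_iff_forall_mem_open]
    rintro ⟨x, t⟩ hp
    simp only [hEpidef, mem_compl_iff, mem_setOf_eq, not_le] at hp
    obtain ⟨y, hy1, hy2⟩ := exists_between hp
    have hyt : y ≠ ⊤ := fun h => absurd (h ▸ hy2) (by simp)
    have hyb : y ≠ ⊥ := fun h => absurd (h ▸ hy1) (by simp)
    set cc := y.toReal with hccdef
    have hcy : (cc : EReal) = y := EReal.coe_toReal hyt hyb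
    have hev : ∀ᶠ x' in nhds x, (cc : EReal) < φ x' := hlsc x cc (by rw [hcy]; exact hy2)
    obtain ⟨U, hU1, hU2, hU3⟩ := _root_.eventually_nhds_iff.mp hev
    refine ⟨U ×ˢ Iio cc, ?_, hU2.prod isOpen_Iio, ?_⟩
    · rintro ⟨x', t'⟩ ⟨hx', ht'⟩
      simp only [hEpidef, mem_compl_iff, mem_setOf_eq, not_le]
      calc ((t' : ℝ) : EReal) < (cc : EReal) := EReal.coe_lt_coe_iff.mpr ht'
        _ < φ x' := hU1 x' hx'
    · exact ⟨hU3, EReal.coe_lt_coe_iff.mp (by rw [hcy]; exact hy1)⟩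
  -- affine minorant of the epigraph
  have hnotmem : ((x₁, r₁ - 1) : X × ℝ) ∉ Epi := by
    simp only [hEpidef, mem_setOf_eq, hφx₁, not_le, EReal.coe_lt_coe_iff]
    linarith
  obtain ⟨f, u, hfE, hfp⟩ := geometric_hahn_banach_closed_point hEconv hEclosed hnotmem
  set β : ℝ := f (0, 1) with hβdef
  set g₁ : X →L[ℝ] ℝ := f.comp (ContinuousLinearMap.inl ℝ X ℝ) with hg₁def
  have hfsplit : ∀ (x : X) (t : ℝ), f (x, t) = g₁ x + t * β := by
    intro x t
    have hp : ((x, t) : X × ℝ) = ((x, (0:ℝ)) : X × ℝ) + t • ((0:X), (1:ℝ)) := by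
      apply Prod.ext <;> simp
    calc f (x, t) = f (((x, (0:ℝ)) : X × ℝ) + t • ((0:X), (1:ℝ))) := by rw [← hp]
      _ = g₁ x + t * β := by rw [map_add, map_smul, smul_eq_mul]; rfl
  have hβneg : β < 0 := by
    have h1 : f (x₁, r₁) < u := hfE _ he₀
    have h2 : u < f (x₁, r₁ - 1) := hfp
    have e1 : f (x₁, r₁) = g₁ x₁ + r₁ * β := hfsplit x₁ r₁
    have e2 : f (x₁, r₁ - 1) = g₁ x₁ + (r₁ - 1) * β := hfsplit x₁ (r₁ - 1)
    rw [e1] at h1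
    rw [e2] at h2
    nlinarith
  set νβ : ℝ := -β with hνβdef
  have hνβpos : 0 < νβ := by simp only [hνβdef]; linarith
  have hminor : ∀ p ∈ Epi, (g₁ p.1 - u) / νβ < p.2 := by
    intro p hp
    have h1 : f p < u := hfE p hp
    have e : f p = g₁ p.1 + p.2 * β := hfsplit p.1 p.2
    rw [e] at h1
    rw [div_lt_iff₀ hνβpos]
    simp only [hνβdef]
    linarith
  -- the functional to minimize over the epigraph
  set G : X × ℝ → ℝ := fun p => ‖p.1‖^2/2 + lam * p.2 - z' p.1 with hGdef
  have hGcont : Continuous G := by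
    apply Continuous.sub
    · exact ((continuous_fst.norm.pow 2).div_const 2).add (continuous_const.mul continuous_snd)
    · exact z'.continuous.comp continuous_fst
  have hsq : ∀ (w₁ w₂ : X) (a b : ℝ), 0 ≤ a → 0 ≤ b → a + b = 1 →
      ‖a • w₁ + b • w₂‖^2 ≤ a * ‖w₁‖^2 + b * ‖w₂‖^2 := by
    intro w₁ w₂ a b ha hb hab
    have htri : ‖a • w₁ + b • w₂‖ ≤ a * ‖w₁‖ + b * ‖w₂‖ := by
      calc ‖a • w₁ + b • w₂‖ ≤ ‖a • w₁‖ + ‖b • w₂‖ := norm_add_le _ _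
        _ = a * ‖w₁‖ + b * ‖w₂‖ := by
            rw [norm_smul, norm_smul, Real.norm_eq_abs, Real.norm_eq_abs,
              abs_of_nonneg ha, abs_of_nonneg hb]
    have hsq1 : ‖a • w₁ + b • w₂‖^2 ≤ (a * ‖w₁‖ + b * ‖w₂‖)^2 :=
      pow_le_pow_left₀ (norm_nonneg _) htri 2
    nlinarith [sq_nonneg (‖w₁‖ - ‖w₂‖), mul_nonneg ha hb]
  have hGsubconv : ∀ c : ℝ, Convex ℝ {p : X × ℝ | G p ≤ c} := by
    intro c p hp q hq a b ha hb hab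
    simp only [mem_setOf_eq, hGdef] at hp hq ⊢
    have hkey := hsq p.1 q.1 a b ha hb hab
    have hz : z' (a • p.1 + b • q.1) = a * z' p.1 + b * z' q.1 := by
      rw [map_add, map_smul, map_smul, smul_eq_mul, smul_eq_mul]
    have h1 : (a • p + b • q).1 = a • p.1 + b • q.1 := rfl
    have h2 : (a • p + b • q).2 = a * p.2 + b * q.2 := rfl
    rw [h1, h2, hz]
    have s1 := mul_le_mul_of_nonneg_left hp ha
    have s2 := mul_le_mul_of_nonneg_left hq hb
    have hc : a * c + b * c = c := by rw [← add_mul, hab, one_mul]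
    linarith [hkey, s1, s2, hc]
  set c₀ : ℝ := G (x₁, r₁) with hc₀def
  set aN : ℝ := ‖g₁‖ with haNdef
  have haN : 0 ≤ aN := norm_nonneg _
  set A1 : ℝ := ‖z'‖ + lam * aN / νβ with hA1def
  have hA1 : 0 ≤ A1 := by
    have h0 : 0 ≤ lam * aN / νβ := div_nonneg (mul_nonneg hlam.le haN) hνβpos.le
    have h1 : 0 ≤ ‖z'‖ := norm_nonneg _
    simp only [hA1def]
    linarith
  set B1 : ℝ := c₀ + lam * |u| / νβ with hB1def
  set M₁ : ℝ := 2*A1 + 1 + 2*|B1| with hM₁def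
  have hM₁pos : 1 ≤ M₁ := by
    simp only [hM₁def]
    have := abs_nonneg B1
    linarith
  have hlow : ∀ p : X × ℝ, p ∈ Epi → -(aN * ‖p.1‖ + |u|) / νβ ≤ p.2 := by
    intro p hp
    have h1 := hminor p hp
    have h2 : -(aN * ‖p.1‖ + |u|) ≤ g₁ p.1 - u := by
      have h3 : |g₁ p.1| ≤ aN * ‖p.1‖ := by
        rw [← Real.norm_eq_abs]
        exact g₁.le_opNorm p.1
      have h4 := (abs_le.mp h3).1
      have h5 := le_abs_self u
      linarith
    calc -(aN * ‖p.1‖ + |u|) / νβ ≤ (g₁ p.1 - u) / νβ := (div_le_div_iff_of_pos_right hνβpos).mpr h2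
      _ ≤ p.2 := le_of_lt h1
  have hzb : ∀ v : X, z' v ≤ ‖z'‖ * ‖v‖ := by
    intro v
    calc z' v ≤ |z' v| := le_abs_self _
      _ = ‖z' v‖ := (Real.norm_eq_abs _).symm
      _ ≤ ‖z'‖ * ‖v‖ := z'.le_opNorm v
  have hM₁b : ∀ p : X × ℝ, p ∈ Epi → G p ≤ c₀ → ‖p.1‖ ≤ M₁ := by
    intro p hp hGp
    have h1 := hlow p hp
    have h2 : ‖p.1‖^2/2 ≤ A1 * ‖p.1‖ + B1 := by
      have h3 : lam * (-(aN * ‖p.1‖ + |u|) / νβ) ≤ lam * p.2 :=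
        mul_le_mul_of_nonneg_left h1 hlam.le
      have h4 : lam * (-(aN * ‖p.1‖ + |u|) / νβ) = -(lam * aN / νβ * ‖p.1‖ + lam * |u| / νβ) := by
        field_simp
      rw [h4] at h3
      have h5 := hzb p.1
      simp only [hGdef] at hGp
      simp only [hA1def, hB1def]
      linarith
    simp only [hM₁def]
    exact bound_from_quad hA1 (norm_nonneg _) h2
  set M₂ : ℝ := (aN * M₁ + |u|) / νβ + |c₀ + ‖z'‖ * M₁| / lam + 1 with hM₂def
  have hM₂b : ∀ p : X × ℝ, p ∈ Epi → G p ≤ c₀ → |p.2| ≤ M₂ := by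
    intro p hp hGp
    have hr := hM₁b p hp hGp
    have h1 := hlow p hp
    have hr0 : (0:ℝ) ≤ ‖p.1‖ := norm_nonneg _
    have h8 : 0 ≤ (aN * M₁ + |u|) / νβ := by
      apply div_nonneg _ hνβpos.le
      have := mul_nonneg haN (le_trans zero_le_one hM₁pos)
      have := abs_nonneg u
      linarith
    have hA : 0 ≤ |c₀ + ‖z'‖ * M₁| / lam := div_nonneg (abs_nonneg _) hlam.le
    have hub : p.2 ≤ (c₀ + ‖z'‖ * M₁) / lam := by
      rw [le_div_iff₀ hlam]
      have h5 := hzb p.1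
      simp only [hGdef] at hGp
      linarith [sq_nonneg ‖p.1‖, mul_le_mul_of_nonneg_left hr (norm_nonneg z')]
    have hlb : -((aN * M₁ + |u|) / νβ) ≤ p.2 := by
      have h6 : -(aN * M₁ + |u|) ≤ -(aN * ‖p.1‖ + |u|) := by
        have := mul_le_mul_of_nonneg_left hr haN
        linarith
      have h7 : -(aN * M₁ + |u|) / νβ ≤ -(aN * ‖p.1‖ + |u|) / νβ :=
        (div_le_div_iff_of_pos_right hνβpos).mpr h6
      calc -((aN * M₁ + |u|) / νβ) = -(aN * M₁ + |u|) / νβ := by ring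
        _ ≤ -(aN * ‖p.1‖ + |u|) / νβ := h7
        _ ≤ p.2 := h1
    rw [abs_le]
    constructor
    · simp only [hM₂def]
      linarith
    · have h9 : (c₀ + ‖z'‖ * M₁) / lam ≤ |c₀ + ‖z'‖ * M₁| / lam :=
        (div_le_div_iff_of_pos_right hlam).mpr (le_abs_self _)
      simp only [hM₂def]
      linarith
  set R : ℝ := max (max M₁ M₂) (max ‖x₁‖ |r₁|) with hRdef
  set K : Set (X × ℝ) := Epi ∩ (closedBall (0:X) R ×ˢ closedBall (0:ℝ) R) with hKdef
  have hKconv : Convex ℝ K := hEconv.inter ((convex_closedBall _ _).prod (convex_closedBall _ _))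
  have hKclosed : IsClosed K := hEclosed.inter ((isClosed_closedBall).prod (isClosed_closedBall))
  have hKcompact : @IsCompact (X × ℝ) (@instTopologicalSpaceProd X ℝ (wkt X) _) K :=
    @IsCompact.of_isClosed_subset (X × ℝ) (@instTopologicalSpaceProd X ℝ (wkt X) _) _ _
      (ball_prod_wcompact hrefl R) (mazur_prod hKconv hKclosed) inter_subset_right
  have hx₁R : ‖x₁‖ ≤ R := le_trans (le_max_left _ _) (le_max_right _ _)
  have hr₁R : |r₁| ≤ R := le_trans (le_max_right _ _) (le_max_right _ _)
  have hM₁R : M₁ ≤ R := le_trans (le_max_left _ _) (le_max_left _ _)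
  have hM₂R : M₂ ≤ R := le_trans (le_max_right _ _) (le_max_left _ _)
  have hKne : ((x₁, r₁) : X × ℝ) ∈ K := by
    refine ⟨he₀, ?_, ?_⟩
    · rwa [mem_closedBall_zero_iff]
    · rw [mem_closedBall_zero_iff, Real.norm_eq_abs]
      exact hr₁R
  obtain ⟨p₀, hp₀K, hp₀min⟩ := @lsc_min (X × ℝ) (@instTopologicalSpaceProd X ℝ (wkt X) _) K
    hKcompact ⟨_, hKne⟩ G
    (fun c => mazur_prod (hGsubconv c) (IsClosed.preimage hGcont isClosed_Iic))
  have hp₀E : p₀ ∈ Epi := hp₀K.1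
  have hp₀c₀ : G p₀ ≤ c₀ := hp₀min _ hKne
  have hgmin : ∀ q ∈ Epi, G p₀ ≤ G q := by
    intro q hq
    by_contra hcon
    push_neg at hcon
    have hq0 : G q ≤ c₀ := le_trans hcon.le hp₀c₀
    have hqK : q ∈ K := by
      refine ⟨hq, ?_, ?_⟩
      · rw [mem_closedBall_zero_iff]
        exact le_trans (hM₁b q hq hq0) hM₁R
      · rw [mem_closedBall_zero_iff, Real.norm_eq_abs]
        exact le_trans (hM₂b q hq hq0) hM₂R
    exact absurd (hp₀min q hqK) (not_le.mpr hcon)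
  set x₀ : X := p₀.1 with hx₀def
  set t₀ : ℝ := p₀.2 with ht₀def
  have hx₀E : φ x₀ ≤ (t₀ : EReal) := hp₀E
  -- second separation: split the optimality condition
  set qf : X → ℝ := fun v => ‖x₀ + v‖^2/2 - ‖x₀‖^2/2 with hqfdef
  set SA : Set (X × ℝ) := {p | qf p.1 < p.2} with hSAdef
  set SB : Set (X × ℝ) :=
    {p | ∃ s : ℝ, φ (x₀ + p.1) ≤ (s : EReal) ∧ p.2 ≤ z' p.1 - lam * (s - t₀)} with hSBdef
  have hSAopen : IsOpen SA := by
    have hc1 : Continuous fun p : X × ℝ => qf p.1 := by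
      simp only [hqfdef]
      exact (((continuous_const.add continuous_fst).norm.pow 2).div_const 2).sub continuous_const
    show IsOpen {p : X × ℝ | qf p.1 < p.2}
    exact isOpen_lt hc1 continuous_snd
  have hSAconv : Convex ℝ SA := by
    rintro p hp q hq a b ha hb hab
    simp only [hSAdef, mem_setOf_eq, hqfdef] at hp hq ⊢
    have h1 : (a • p + b • q).1 = a • p.1 + b • q.1 := rfl
    have h2 : (a • p + b • q).2 = a * p.2 + b * q.2 := rfl
    rw [h1, h2]
    have hx : x₀ + (a • p.1 + b • q.1) = a • (x₀ + p.1) + b • (x₀ + q.1) := by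
      have hmod : a • (x₀ + p.1) + b • (x₀ + q.1) = (a + b) • x₀ + (a • p.1 + b • q.1) := by
        module
      rw [hmod, hab, one_smul]
    rw [hx]
    have hkey := hsq (x₀ + p.1) (x₀ + q.1) a b ha hb hab
    rcases lt_or_eq_of_le ha with ha' | ha'
    · have s1 : a * (‖x₀ + p.1‖^2/2 - ‖x₀‖^2/2) < a * p.2 :=
        mul_lt_mul_of_pos_left hp ha'
      have s2 : b * (‖x₀ + q.1‖^2/2 - ‖x₀‖^2/2) ≤ b * q.2 :=
        mul_le_mul_of_nonneg_left hq.le hb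
      have hcx : a * ‖x₀‖^2 + b * ‖x₀‖^2 = ‖x₀‖^2 := by rw [← add_mul, hab, one_mul]
      linarith [hkey, s1, s2, hcx]
    · have hb1 : b = 1 := by linarith
      have s2 : b * (‖x₀ + q.1‖^2/2 - ‖x₀‖^2/2) < b * q.2 := by
        rw [hb1, one_mul, one_mul]; exact hq
      have s1 : a * (‖x₀ + p.1‖^2/2 - ‖x₀‖^2/2) ≤ a * p.2 :=
        mul_le_mul_of_nonneg_left hp.le ha
      have hcx : a * ‖x₀‖^2 + b * ‖x₀‖^2 = ‖x₀‖^2 := by rw [← add_mul, hab, one_mul]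
      linarith [hkey, s1, s2, hcx]
  have hSBconv : Convex ℝ SB := by
    rintro p ⟨s₁, hs₁, hc₁⟩ q ⟨s₂, hs₂, hc₂⟩ a b ha hb hab
    refine ⟨a * s₁ + b * s₂, ?_, ?_⟩
    · have h1 : (a • p + b • q).1 = a • p.1 + b • q.1 := rfl
      rw [h1]
      have hx : x₀ + (a • p.1 + b • q.1) = a • (x₀ + p.1) + b • (x₀ + q.1) := by
        have hmod : a • (x₀ + p.1) + b • (x₀ + q.1) = (a + b) • x₀ + (a • p.1 + b • q.1) := by
          module
        rw [hmod, hab, one_smul]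
      rw [hx]
      exact conv_epi hconv hbot ha hb hab hs₁ hs₂
    · have h1 : (a • p + b • q).1 = a • p.1 + b • q.1 := rfl
      have h2 : (a • p + b • q).2 = a * p.2 + b * q.2 := rfl
      rw [h1, h2, map_add, map_smul, map_smul, smul_eq_mul, smul_eq_mul]
      have s1 := mul_le_mul_of_nonneg_left hc₁ ha
      have s2 := mul_le_mul_of_nonneg_left hc₂ hb
      have ht : a * (lam * t₀) + b * (lam * t₀) = lam * t₀ := by rw [← add_mul, hab, one_mul]
      linarith [s1, s2, ht]
  have hdisj : Disjoint SA SB := by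
    rw [Set.disjoint_left]
    rintro ⟨v, r⟩ hA ⟨s, hφs, hr⟩
    simp only [hSAdef, mem_setOf_eq] at hA
    have hA' : qf v < r := hA
    simp only [hqfdef] at hA'
    have hr' : r ≤ z' v - lam * (s - t₀) := hr
    have hmem : ((x₀ + v, s) : X × ℝ) ∈ Epi := hφs
    have h1 := hgmin _ hmem
    simp only [hGdef] at h1
    have h2 : z' (x₀ + v) = z' x₀ + z' v := map_add _ _ _
    rw [h2] at h1
    linarith
  obtain ⟨f2, u2, hf2A, hf2B⟩ := geometric_hahn_banach_open hSAconv hSAopen hSBconv hdisj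
  set α : ℝ := f2 (0, 1) with hαdef
  set g2 : X →L[ℝ] ℝ := f2.comp (ContinuousLinearMap.inl ℝ X ℝ) with hg2def
  have hf2split : ∀ (x : X) (t : ℝ), f2 (x, t) = g2 x + t * α := by
    intro x t
    have hp : ((x, t) : X × ℝ) = ((x, (0:ℝ)) : X × ℝ) + t • ((0:X), (1:ℝ)) := by
      apply Prod.ext <;> simp
    calc f2 (x, t) = f2 (((x, (0:ℝ)) : X × ℝ) + t • ((0:X), (1:ℝ))) := by rw [← hp]
      _ = g2 x + t * α := by rw [map_add, map_smul, smul_eq_mul]; rfl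
  have hqf0 : qf 0 = 0 := by simp [hqfdef]
  have hu2le : u2 ≤ 0 := by
    have hmem : ((0, 0) : X × ℝ) ∈ SB := by
      refine ⟨t₀, by simpa using hx₀E, by simp⟩
    have h1 := hf2B _ hmem
    rw [hf2split 0 0] at h1
    simpa using h1
  have hAmem : ∀ r : ℝ, 0 < r → ((0, r) : X × ℝ) ∈ SA := by
    intro r hr
    simp only [hSAdef, mem_setOf_eq]
    show qf 0 < r
    rw [hqf0]
    exact hr
  have hf20r : ∀ r : ℝ, f2 (0, r) = r * α := by
    intro r
    rw [hf2split 0 r, map_zero, zero_add]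
  have hu2ge : 0 ≤ u2 := by
    by_contra hcon
    push_neg at hcon
    have h1 : ∀ r : ℝ, 0 < r → r * α < u2 := by
      intro r hr
      have := hf2A _ (hAmem r hr)
      rwa [hf20r] at this
    have hα : α < 0 := by
      have := h1 1 one_pos
      linarith
    have h2 := h1 (u2 / (2 * α)) (div_pos_of_neg_of_neg hcon (by linarith))
    have h3 : u2 / (2 * α) * α = u2 / 2 := by
      field_simp [hα.ne]
    rw [h3] at h2
    linarith
  have hu2 : u2 = 0 := le_antisymm hu2le hu2ge
  have hαneg : α < 0 := by
    have := hf2A _ (hAmem 1 one_pos)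
    rw [hf20r, hu2] at this
    linarith
  have hναpos : 0 < -α := by linarith
  have hkey1 : ∀ v : X, g2 v + α * qf v ≤ 0 := by
    intro v
    by_contra hcon
    push_neg at hcon
    set d : ℝ := g2 v + α * qf v with hddef
    have hd : 0 < d := hcon
    have hmem : ((v, qf v + d / (-α)) : X × ℝ) ∈ SA := by
      simp only [hSAdef, mem_setOf_eq]
      show qf v < qf v + d / (-α)
      have : 0 < d / (-α) := div_pos hd hναpos
      linarith
    have h1 := hf2A _ hmem
    rw [hf2split v (qf v + d / (-α)), hu2] at h1
    have h2 : (qf v + d / (-α)) * α = α * qf v - d := by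
      rw [div_neg, add_mul, neg_mul, div_mul_cancel₀ d hαneg.ne]
      ring
    rw [h2] at h1
    simp only [hddef] at h1
    linarith
  have hkey2 : ∀ (w : X) (s : ℝ), φ (x₀ + w) ≤ (s : EReal) →
      z' w - lam * (s - t₀) ≤ g2 w / (-α) := by
    intro w s hφs
    have hmem : ((w, z' w - lam * (s - t₀)) : X × ℝ) ∈ SB := ⟨s, hφs, le_refl _⟩
    have h1 := hf2B _ hmem
    rw [hf2split w (z' w - lam * (s - t₀)), hu2] at h1
    rw [le_div_iff₀ hναpos]
    nlinarith [h1]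
  set ℓ : X →L[ℝ] ℝ := (-α)⁻¹ • g2 with hℓdef
  have hℓval : ∀ v : X, ℓ v = g2 v / (-α) := by
    intro v
    simp only [hℓdef, ContinuousLinearMap.smul_apply, smul_eq_mul]
    rw [div_eq_inv_mul]
  have hℓq : ∀ v : X, ℓ v ≤ ‖x₀ + v‖^2/2 - ‖x₀‖^2/2 := by
    intro v
    rw [hℓval, div_le_iff₀ hναpos]
    have hk := hkey1 v
    simp only [hqfdef] at hk
    nlinarith [hk]
  have hdual := duality_of_subgrad hℓq
  refine ⟨x₀, ℓ, lam⁻¹ • (z' - ℓ), ⟨hdual.1, hdual.2⟩, ?_, ?_⟩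
  · -- subdifferential membership
    intro y
    by_cases hy : φ y = ⊤
    · rw [hy]; exact le_top
    · have hys : φ y = ((φ y).toReal : EReal) := (EReal.coe_toReal hy (hbot y)).symm
      set s : ℝ := (φ y).toReal with hsdef
      have hφs : φ (x₀ + (y - x₀)) ≤ (s : EReal) := by
        rw [add_sub_cancel]
        exact le_of_eq hys
      have h1 := hkey2 (y - x₀) s hφs
      rw [← hℓval] at h1
      have hx₀t : φ x₀ ≠ ⊤ := ne_top_of_le_ne_top (EReal.coe_ne_top t₀) hx₀E
      have hx₀r : φ x₀ = ((φ x₀).toReal : EReal) := (EReal.coe_toReal hx₀t (hbot x₀)).symm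
      set c : ℝ := (φ x₀).toReal with hcdef
      have hct : c ≤ t₀ := by
        rw [hx₀r] at hx₀E
        exact EReal.coe_le_coe_iff.mp hx₀E
      have hval : (lam⁻¹ • (z' - ℓ)) (y - x₀) = lam⁻¹ * (z' (y - x₀) - ℓ (y - x₀)) := by
        simp only [ContinuousLinearMap.smul_apply, ContinuousLinearMap.sub_apply, smul_eq_mul]
      show (((lam⁻¹ • (z' - ℓ)) (y - x₀) : ℝ) : EReal) + φ x₀ ≤ φ y
      rw [hval, hx₀r, ← EReal.coe_add, hys, EReal.coe_le_coe_iff]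
      have h2 : z' (y - x₀) - ℓ (y - x₀) ≤ lam * (s - t₀) := by linarith
      have h3 : lam⁻¹ * (z' (y - x₀) - ℓ (y - x₀)) ≤ lam⁻¹ * (lam * (s - t₀)) :=
        mul_le_mul_of_nonneg_left h2 (inv_nonneg.mpr hlam.le)
      have h4 : lam⁻¹ * (lam * (s - t₀)) = s - t₀ := by
        field_simp
      rw [h4] at h3
      linarith
  · -- z' = ℓ + lam • (lam⁻¹ • (z' - ℓ))
    rw [smul_smul, mul_inv_cancel₀ hlam.ne', one_smul]
    abel
end
end
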